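/- Let F ⊆ E be a field extension such that E is linearly disjoint from the algebraic closure of F over F (i.e. E/F is regular). Let I be a prime ideal of F[X_1,...,X_n]. Then the extension of I to E[X_1,...,X_n] is a prime ideal. -/

import Mathlib

set_option synthInstance.maxHeartbeats 1000000
set_option maxHeartbeats 2000000

open TensorProduct

/-- Nullstellensatz-type lemma: for a finitely generated domain `A` over an algebraically
closed field `k` and a nonzero `a : A`, there is a `k`-algebra homomorphism `A → k`
not vanishing on `a`. -/
theorem aux_exists_algHom_ne_zero {k A : Type*} [Field k] [IsAlgClosed k] [CommRing A]
    [IsDomain A] [Algebra k A] [Algebra.FiniteType k A] {a : A} (ha : a ≠ 0) :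
    ∃ χ : A →ₐ[k] k, χ a ≠ 0 := by
  classical
  obtain ⟨ι, hfin, g, hg⟩ := Algebra.FiniteType.iff_quotient_mvPolynomial'.mp
    (inferInstance : Algebra.FiniteType k A)
  haveI : Fintype ι := hfin
  haveI : IsJacobsonRing A := isJacobsonRing_of_surjective ⟨g.toRingHom, hg⟩
  have hjac : Ideal.jacobson (⊥ : Ideal A) = ⊥ :=
    (inferInstance : IsJacobsonRing A).out Ideal.isRadical_bot_of_noZeroDivisors
  have hnm : a ∉ Ideal.jacobson (⊥ : Ideal A) := by
    rw [hjac]; simpa using ha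
  have hex : ∃ m : Ideal A, ((⊥ : Ideal A) ≤ m ∧ m.IsMaximal) ∧ a ∉ m := by
    by_contra hcon
    push_neg at hcon
    exact hnm (Ideal.mem_sInf.mpr fun {J} hJ => hcon J hJ)
  obtain ⟨m, ⟨-, hmax⟩, ham⟩ := hex
  haveI : m.IsMaximal := hmax
  letI : Field (A ⧸ m) := Ideal.Quotient.field m
  haveI : Algebra.FiniteType k (A ⧸ m) :=
    Algebra.FiniteType.of_surjective
      (Ideal.Quotient.mkₐ k m) (Ideal.Quotient.mkₐ_surjective k m)
  obtain ⟨ι', hfin', h, hh⟩ := Algebra.FiniteType.iff_quotient_mvPolynomial'.mp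
    (inferInstance : Algebra.FiniteType k (A ⧸ m))
  haveI : Fintype ι' := hfin'
  have hint : (h.toRingHom.comp MvPolynomial.C).IsIntegral :=
    MvPolynomial.comp_C_integral_of_surjective_of_isJacobsonRing h.toRingHom hh
  have heq : h.toRingHom.comp MvPolynomial.C = algebraMap k (A ⧸ m) := by
    ext x
    simpa using h.commutes x
  haveI : Algebra.IsIntegral k (A ⧸ m) := by
    refine ⟨fun x => ?_⟩
    have := hint x
    rwa [heq] at this
  have hsurj : Function.Surjective (algebraMap k (A ⧸ m)) :=
    IsAlgClosed.algebraMap_bijective_of_isIntegral.2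
  let e := RingEquiv.ofBijective (algebraMap k (A ⧸ m))
    ⟨(algebraMap k (A ⧸ m)).injective, hsurj⟩
  refine ⟨⟨e.symm.toRingHom.comp (Ideal.Quotient.mk m), fun r => ?_⟩, fun hc => ?_⟩
  · show e.symm (Ideal.Quotient.mk m (algebraMap k A r)) = r
    rw [Ideal.Quotient.mk_algebraMap]
    exact e.symm_apply_apply r
  · apply ham
    have hc' : e.symm (Ideal.Quotient.mk m a) = 0 := hc
    have : Ideal.Quotient.mk m a = 0 := by
      apply e.symm.injective
      rw [hc', map_zero]
    exact Ideal.Quotient.eq_zero_iff_mem.mp this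

/-- If `k` is algebraically closed, `A` a finitely generated `k`-algebra domain and `B`
a `k`-algebra domain, then `A ⊗[k] B` has no (nonzero) zero divisors. -/
theorem aux_tensor_mul_ne_zero {k A B : Type*} [Field k] [IsAlgClosed k] [CommRing A]
    [IsDomain A] [Algebra k A] [Algebra.FiniteType k A] [CommRing B] [IsDomain B] [Algebra k B]
    {x y : A ⊗[k] B} (hx : x ≠ 0) (hy : y ≠ 0) : x * y ≠ 0 := by
  classical
  set bB := Module.Basis.ofVectorSpace k B with hbB
  set bT := bB.baseChange A with hbT
  have hrx : bT.repr x ≠ 0 := fun h => hx (bT.repr.map_eq_zero_iff.mp h)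
  have hry : bT.repr y ≠ 0 := fun h => hy (bT.repr.map_eq_zero_iff.mp h)
  obtain ⟨i0, hi0⟩ := Finsupp.ne_iff.mp hrx
  obtain ⟨j0, hj0⟩ := Finsupp.ne_iff.mp hry
  simp only [Finsupp.coe_zero, Pi.zero_apply] at hi0 hj0
  obtain ⟨χ, hχ⟩ := aux_exists_algHom_ne_zero (k := k) (mul_ne_zero hi0 hj0)
  rw [map_mul] at hχ
  have hχ1 : χ (bT.repr x i0) ≠ 0 := left_ne_zero_of_mul hχ
  have hχ2 : χ (bT.repr y j0) ≠ 0 := right_ne_zero_of_mul hχ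
  let μ : A ⊗[k] B →ₐ[k] B := Algebra.TensorProduct.lift ((Algebra.ofId k B).comp χ)
    (AlgHom.id k B) (fun x y => Commute.all (((Algebra.ofId k B).comp χ) x) ((AlgHom.id k B) y))
  have hμtmul : ∀ (a : A) (b : B), μ (a ⊗ₜ[k] b) = χ a • b := by
    intro a b
    show Algebra.TensorProduct.lift _ _ _ (a ⊗ₜ[k] b) = χ a • b
    rw [Algebra.TensorProduct.lift_tmul]
    show algebraMap k B (χ a) * b = χ a • b
    rw [Algebra.smul_def]
  have hkey : ∀ (z : A ⊗[k] B) (i : _), bB.repr (μ z) i = χ (bT.repr z i) := by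
    intro z
    induction z using TensorProduct.induction_on with
    | zero => intro i; simp
    | tmul a b =>
      intro i
      rw [hμtmul a b, map_smul, hbT]
      simp only [Module.Basis.baseChange_repr_tmul, Finsupp.smul_apply]
      rw [Algebra.smul_def ((bB.repr b) i) a, map_mul, χ.commutes]
      simp [Algebra.algebraMap_self_apply, mul_comm]
    | add u v hu hv =>
      intro i
      simp only [map_add, Finsupp.add_apply, hu i, hv i]
  have hμx : μ x ≠ 0 := by
    intro h0
    apply hχ1
    have := hkey x i0
    rw [h0, map_zero] at this
    simpa using this.symm
  have hμy : μ y ≠ 0 := by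
    intro h0
    apply hχ2
    have := hkey y j0
    rw [h0, map_zero] at this
    simpa using this.symm
  intro hxy0
  exact mul_ne_zero hμx hμy (by rw [← map_mul, hxy0, map_zero])

/-- Over an algebraically closed field, the tensor product of two domains is a domain. -/
theorem aux_isDomain_tensor {k A B : Type*} [Field k] [IsAlgClosed k] [CommRing A]
    [IsDomain A] [Algebra k A] [CommRing B] [IsDomain B] [Algebra k B] :
    IsDomain (A ⊗[k] B) := by
  classical
  haveI : Nontrivial (A ⊗[k] B) := by
    obtain ⟨i⟩ := (Module.Basis.ofVectorSpace k B).index_nonempty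
    exact nontrivial_of_ne _ 0 (((Module.Basis.ofVectorSpace k B).baseChange A).ne_zero i)
  haveI : NoZeroDivisors (A ⊗[k] B) := by
    constructor
    intro x y hxy
    by_contra hc
    push_neg at hc
    obtain ⟨hx, hy⟩ := hc
    obtain ⟨Sx, hSx⟩ := TensorProduct.exists_finset x
    obtain ⟨Sy, hSy⟩ := TensorProduct.exists_finset y
    classical
    let s : Finset A := Sx.image Prod.fst ∪ Sy.image Prod.fst
    let A0 : Subalgebra k A := Algebra.adjoin k (s : Set A)
    haveI : Algebra.FiniteType k A0 :=
      (Subalgebra.fg_iff_finiteType A0).mp (Subalgebra.fg_adjoin_finset s)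
    let inc : A0 ⊗[k] B →ₐ[k] A ⊗[k] B := Algebra.TensorProduct.map A0.val (AlgHom.id k B)
    have hincr : ∀ z, inc z = LinearMap.rTensor B A0.val.toLinearMap z := by
      intro z
      induction z using TensorProduct.induction_on with
      | zero => rw [map_zero, map_zero]
      | tmul a b => rfl
      | add u v hu hv => rw [map_add, map_add, hu, hv]
    have hinj : Function.Injective inc := by
      intro u v huv
      have hr := Module.Flat.rTensor_preserves_injective_linearMap (M := B)
        A0.val.toLinearMap Subtype.val_injective
      apply hr
      rw [← hincr, ← hincr, huv]
    have hmemx : ∀ p ∈ Sx, p.1 ∈ A0 := fun p hp =>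
      Algebra.subset_adjoin
        (Finset.mem_coe.mpr (Finset.mem_union_left _ (Finset.mem_image_of_mem Prod.fst hp)))
    have hmemy : ∀ p ∈ Sy, p.1 ∈ A0 := fun p hp =>
      Algebra.subset_adjoin
        (Finset.mem_coe.mpr (Finset.mem_union_right _ (Finset.mem_image_of_mem Prod.fst hp)))
    let x0 : A0 ⊗[k] B := ∑ p ∈ Sx.attach, (⟨p.1.1, hmemx p.1 p.2⟩ : A0) ⊗ₜ[k] p.1.2
    let y0 : A0 ⊗[k] B := ∑ p ∈ Sy.attach, (⟨p.1.1, hmemy p.1 p.2⟩ : A0) ⊗ₜ[k] p.1.2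
    have hx0 : inc x0 = x := by
      rw [hSx]
      show inc (∑ p ∈ Sx.attach, (⟨p.1.1, hmemx p.1 p.2⟩ : A0) ⊗ₜ[k] p.1.2) = _
      rw [map_sum]
      simp only [hincr, LinearMap.rTensor_tmul, AlgHom.toLinearMap_apply, Subalgebra.coe_val]
      exact Finset.sum_attach Sx (fun p => p.1 ⊗ₜ[k] p.2)
    have hy0 : inc y0 = y := by
      rw [hSy]
      show inc (∑ p ∈ Sy.attach, (⟨p.1.1, hmemy p.1 p.2⟩ : A0) ⊗ₜ[k] p.1.2) = _
      rw [map_sum]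
      simp only [hincr, LinearMap.rTensor_tmul, AlgHom.toLinearMap_apply, Subalgebra.coe_val]
      exact Finset.sum_attach Sy (fun p => p.1 ⊗ₜ[k] p.2)
    have h0 : x0 * y0 = 0 := by
      apply hinj
      rw [map_mul, hx0, hy0, hxy, map_zero]
    exact aux_tensor_mul_ne_zero (k := k)
      (fun h => hx (by rw [← hx0, h, map_zero]))
      (fun h => hy (by rw [← hy0, h, map_zero])) h0
  exact NoZeroDivisors.to_isDomain _

/-- If `E ⊗[F] F̄` is a domain then so is `E ⊗[F] K` for every field extension `K / F`. -/
theorem aux_isDomain_baseChange (F E K : Type*) [Field F] [Field E] [Field K]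
    [Algebra F E] [Algebra F K]
    (hreg : IsDomain (E ⊗[F] (AlgebraicClosure F))) : IsDomain (E ⊗[F] K) := by
  classical
  haveI : IsDomain (E ⊗[F] (AlgebraicClosure F)) := hreg
  let j : AlgebraicClosure F →ₐ[F] AlgebraicClosure K := IsAlgClosed.lift
  letI : Algebra (AlgebraicClosure F) (AlgebraicClosure K) := j.toAlgebra
  haveI : IsScalarTower F (AlgebraicClosure F) (AlgebraicClosure K) :=
    IsScalarTower.of_algebraMap_eq fun x => (j.commutes x).symm
  haveI : IsDomain ((AlgebraicClosure F) ⊗[F] E) :=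
    Function.Injective.isDomain
      (Algebra.TensorProduct.comm F (AlgebraicClosure F) E).toRingEquiv.toRingHom
      (Algebra.TensorProduct.comm F (AlgebraicClosure F) E).toRingEquiv.injective
  haveI hT : IsDomain ((AlgebraicClosure K) ⊗[AlgebraicClosure F]
      ((AlgebraicClosure F) ⊗[F] E)) :=
    aux_isDomain_tensor (k := AlgebraicClosure F)
  let fE : E →ₐ[F] (AlgebraicClosure K) ⊗[AlgebraicClosure F] ((AlgebraicClosure F) ⊗[F] E) :=
    ((Algebra.TensorProduct.includeRight :
        ((AlgebraicClosure F) ⊗[F] E) →ₐ[AlgebraicClosure F] _).restrictScalars F).comp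
      (Algebra.TensorProduct.includeRight : E →ₐ[F] (AlgebraicClosure F) ⊗[F] E)
  let gK : K →ₐ[F] (AlgebraicClosure K) ⊗[AlgebraicClosure F] ((AlgebraicClosure F) ⊗[F] E) :=
    ((Algebra.TensorProduct.includeLeft :
        (AlgebraicClosure K) →ₐ[AlgebraicClosure F] _).restrictScalars F).comp
      (IsScalarTower.toAlgHom F K (AlgebraicClosure K))
  let Φ : (E ⊗[F] K) →ₐ[F]
      (AlgebraicClosure K) ⊗[AlgebraicClosure F] ((AlgebraicClosure F) ⊗[F] E) :=
    Algebra.TensorProduct.lift fE gK (fun x y => Commute.all (fE x) (gK y))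
  have hΦ : Function.Injective Φ := by
    let l1 : E ⊗[F] K →ₗ[F] E ⊗[F] (AlgebraicClosure K) :=
      LinearMap.lTensor E (IsScalarTower.toAlgHom F K (AlgebraicClosure K)).toLinearMap
    let l2 : E ⊗[F] (AlgebraicClosure K) ≃ₗ[F] (AlgebraicClosure K) ⊗[F] E :=
      TensorProduct.comm F E (AlgebraicClosure K)
    let l3 := (TensorProduct.AlgebraTensorModule.cancelBaseChange F (AlgebraicClosure F)
      (AlgebraicClosure F) (AlgebraicClosure K) E).symm
    have hfact : ∀ z, Φ z = l3 (l2 (l1 z)) := by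
      intro z
      induction z using TensorProduct.induction_on with
      | zero => rw [map_zero, map_zero, map_zero, map_zero]
      | tmul e c =>
        have hl : Φ (e ⊗ₜ[F] c) = fE e * gK c := Algebra.TensorProduct.lift_tmul _ _ _ _ _
        have hfE : fE e = (1 : AlgebraicClosure K) ⊗ₜ[AlgebraicClosure F]
            ((1 : AlgebraicClosure F) ⊗ₜ[F] e) := rfl
        have hgK : gK c = (algebraMap K (AlgebraicClosure K) c)
            ⊗ₜ[AlgebraicClosure F] 1 := rfl
        have hr1 : l1 (e ⊗ₜ[F] c) = e ⊗ₜ[F] (algebraMap K (AlgebraicClosure K) c) := rfl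
        have hr2 : l2 (e ⊗ₜ[F] (algebraMap K (AlgebraicClosure K) c)) =
            (algebraMap K (AlgebraicClosure K) c) ⊗ₜ[F] e := rfl
        have hr3 : l3 ((algebraMap K (AlgebraicClosure K) c) ⊗ₜ[F] e) =
            (algebraMap K (AlgebraicClosure K) c) ⊗ₜ[AlgebraicClosure F]
              ((1 : AlgebraicClosure F) ⊗ₜ[F] e) := rfl
        rw [hl, hfE, hgK, Algebra.TensorProduct.tmul_mul_tmul, one_mul, mul_one, hr1, hr2, hr3]
      | add u v hu hv =>
        rw [map_add, map_add, map_add, map_add, hu, hv]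
    intro u v huv
    have h3 : l3 (l2 (l1 u)) = l3 (l2 (l1 v)) := by rw [← hfact, ← hfact, huv]
    have h2 := l3.injective h3
    have h1 := l2.injective h2
    exact Module.Flat.lTensor_preserves_injective_linearMap
      (IsScalarTower.toAlgHom F K (AlgebraicClosure K)).toLinearMap
      ((algebraMap K (AlgebraicClosure K)).injective) h1
  exact Function.Injective.isDomain Φ.toRingHom hΦ

/-- The key kernel computation: if `q : F[X] → K` is an `F`-algebra map to a field with
kernel `I` and `E ⊗[F] K` is a domain, then the extension of `I` to `E[X]` is prime. -/
theorem aux_map_isPrime (F E K : Type*) [Field F] [Field E] [Field K]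
    [Algebra F E] [Algebra F K] (hdom : IsDomain (E ⊗[F] K)) (n : ℕ)
    (I : Ideal (MvPolynomial (Fin n) F)) (q : MvPolynomial (Fin n) F →ₐ[F] K)
    (hq : ∀ p, q p = 0 ↔ p ∈ I) :
    (I.map (MvPolynomial.map (algebraMap F E))).IsPrime := by
  classical
  haveI := hdom
  let ψ : MvPolynomial (Fin n) E →ₐ[E] E ⊗[F] K :=
    MvPolynomial.aeval (fun i => (1 : E) ⊗ₜ[F] q (MvPolynomial.X i))
  have hsub : I.map (MvPolynomial.map (algebraMap F E)) ≤ RingHom.ker ψ.toRingHom := by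
    rw [Ideal.map_le_iff_le_comap]
    intro f hf
    have hψφ : ψ (MvPolynomial.map (algebraMap F E) f) = (1 : E) ⊗ₜ[F] q f := by
      have hhom : (ψ.restrictScalars F).comp (MvPolynomial.mapAlgHom (Algebra.ofId F E)) =
          (Algebra.TensorProduct.includeRight : K →ₐ[F] E ⊗[F] K).comp q := by
        apply MvPolynomial.algHom_ext
        intro i
        simp [ψ, MvPolynomial.mapAlgHom_apply]
      have h2 := DFunLike.congr_fun hhom f
      simpa [MvPolynomial.mapAlgHom_apply] using h2
    have hqf : q f = 0 := (hq f).mpr hf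
    show ψ (MvPolynomial.map (algebraMap F E) f) = 0
    rw [hψφ, hqf, TensorProduct.tmul_zero]
  have hsup : RingHom.ker ψ.toRingHom ≤ I.map (MvPolynomial.map (algebraMap F E)) := by
    intro x hx
    have hψx : ψ x = 0 := hx
    let Θ : E ⊗[F] MvPolynomial (Fin n) F ≃ₐ[E] MvPolynomial (Fin n) E :=
      MvPolynomial.algebraTensorAlgEquiv F E
    let G : E ⊗[F] MvPolynomial (Fin n) F →ₐ[E] E ⊗[F] K :=
      Algebra.TensorProduct.map (AlgHom.id E E) q
    have hψG : ψ = G.comp Θ.symm.toAlgHom := by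
      apply MvPolynomial.algHom_ext
      intro i
      show ψ (MvPolynomial.X i) = G (Θ.symm (MvPolynomial.X i))
      rw [show Θ.symm (MvPolynomial.X i) = (1 : E) ⊗ₜ[F] MvPolynomial.X i from
        MvPolynomial.algebraTensorAlgEquiv_symm_X (R := F) (A := E) i]
      simp [ψ, G]
    have hGz : G (Θ.symm x) = 0 := by
      have h := DFunLike.congr_fun hψG x
      rw [show G (Θ.symm x) = (G.comp Θ.symm.toAlgHom) x from rfl, ← h]
      exact hψx
    let ι : (Submodule.restrictScalars F I) →ₗ[F] MvPolynomial (Fin n) F :=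
      (Submodule.restrictScalars F I).subtype
    have hexact : Function.Exact ι q.toLinearMap := by
      rw [LinearMap.exact_iff, Submodule.range_subtype]
      ext p
      simp only [LinearMap.mem_ker, AlgHom.toLinearMap_apply, Submodule.restrictScalars_mem]
      exact hq p
    have hexE := Module.Flat.lTensor_exact E hexact
    have hGl : ∀ z, G z = LinearMap.lTensor E q.toLinearMap z := by
      intro z
      induction z using TensorProduct.induction_on with
      | zero => rw [map_zero, map_zero]
      | tmul a b => rfl
      | add u v hu hv => rw [map_add, map_add, hu, hv]
    obtain ⟨w, hw⟩ := (hexE (Θ.symm x)).mp (by rw [← hGl]; exact hGz)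
    have hx' : x = Θ (LinearMap.lTensor E ι w) := by
      rw [hw]
      exact (Θ.apply_symm_apply x).symm
    rw [hx']
    clear hx' hw hGz hψx hx
    induction w using TensorProduct.induction_on with
    | zero => rw [map_zero, map_zero]; exact Ideal.zero_mem _
    | tmul e f =>
      rw [LinearMap.lTensor_tmul]
      show Θ (e ⊗ₜ[F] (f : MvPolynomial (Fin n) F)) ∈ _
      rw [show Θ (e ⊗ₜ[F] (f : MvPolynomial (Fin n) F)) =
          e • MvPolynomial.map (algebraMap F E) (f : MvPolynomial (Fin n) F) from
        MvPolynomial.algebraTensorAlgEquiv_tmul _ _ _ _]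
      rw [MvPolynomial.smul_eq_C_mul]
      exact Ideal.mul_mem_left _ _ (Ideal.mem_map_of_mem _ f.2)
    | add u v hu hv =>
      rw [map_add, map_add]
      exact Ideal.add_mem _ hu hv
  have hker : I.map (MvPolynomial.map (algebraMap F E)) = RingHom.ker ψ.toRingHom :=
    le_antisymm hsub hsup
  rw [hker]
  exact RingHom.ker_isPrime ψ.toRingHom

/-- If `E/F` is a regular field extension (i.e. `E ⊗[F] F̄` is a domain) and `I` is a prime
ideal of `F[X₁,…,Xₙ]`, then the extension of `I` to `E[X₁,…,Xₙ]` is prime. -/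
theorem stmt_1 (F E : Type) [Field F] [Field E] [Algebra F E]
    (hreg : IsDomain (E ⊗[F] (AlgebraicClosure F)))
    (n : ℕ) (I : Ideal (MvPolynomial (Fin n) F)) (hI : I.IsPrime) :
    (I.map (MvPolynomial.map (algebraMap F E))).IsPrime := by
  haveI := hI
  haveI : IsDomain (MvPolynomial (Fin n) F ⧸ I) := Ideal.Quotient.isDomain I
  refine aux_map_isPrime F E (FractionRing (MvPolynomial (Fin n) F ⧸ I))
    (aux_isDomain_baseChange F E _ hreg) n I
    ((IsScalarTower.toAlgHom F (MvPolynomial (Fin n) F ⧸ I) _).comp (Ideal.Quotient.mkₐ F I))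
    (fun p => ?_)
  show algebraMap (MvPolynomial (Fin n) F ⧸ I) (FractionRing (MvPolynomial (Fin n) F ⧸ I))
      (Ideal.Quotient.mk I p) = 0 ↔ p ∈ I
  rw [map_eq_zero_iff _ (IsFractionRing.injective (MvPolynomial (Fin n) F ⧸ I)
    (FractionRing (MvPolynomial (Fin n) F ⧸ I))), Ideal.Quotient.eq_zero_iff_mem]
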